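/- arXiv:2107.03153 — 6 statements merged into one kernel-verified Lean document; each statement's English description precedes it below -/
import Mathlib

section
/- Lemma (Angles, Lemma 2.6): Let p, x, y, z be points of ℝ³ with x, y, z all distinct from p, regarded as determining three rays emanating from p. Then the unoriented angles between these rays satisfy the triangle inequality: ∠xpy ≤ ∠xpz + ∠zpy. -/
open EuclideanGeometry

open InnerProductGeometry Real RealInnerProductSpace in
private lemma angle_triangle_vec {V : Type*} [NormedAddCommGroup V]
    [InnerProductSpace ℝ V] (u v w : V) :
    InnerProductGeometry.angle u v ≤
      InnerProductGeometry.angle u w + InnerProductGeometry.angle w v := by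
  by_cases hpi : π ≤ InnerProductGeometry.angle u w + InnerProductGeometry.angle w v
  · exact le_trans (InnerProductGeometry.angle_le_pi u v) hpi
  push_neg at hpi
  rcases eq_or_ne u 0 with rfl | hu
  · have h1 : InnerProductGeometry.angle 0 v = π / 2 := angle_zero_left v
    have h2 : InnerProductGeometry.angle 0 w = π / 2 := angle_zero_left w
    have h3 := InnerProductGeometry.angle_nonneg w v
    linarith
  rcases eq_or_ne v 0 with rfl | hv
  · have h1 : InnerProductGeometry.angle u 0 = π / 2 := angle_zero_right u
    have h2 : InnerProductGeometry.angle w 0 = π / 2 := angle_zero_right w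
    have h3 := InnerProductGeometry.angle_nonneg u w
    linarith
  rcases eq_or_ne w 0 with rfl | hw
  · have h1 : InnerProductGeometry.angle u 0 = π / 2 := angle_zero_right u
    have h2 : InnerProductGeometry.angle 0 v = π / 2 := angle_zero_left v
    have h3 := InnerProductGeometry.angle_le_pi u v
    linarith
  -- normalize
  have hun : ‖u‖ ≠ 0 := norm_ne_zero_iff.2 hu
  have hvn : ‖v‖ ≠ 0 := norm_ne_zero_iff.2 hv
  have hwn : ‖w‖ ≠ 0 := norm_ne_zero_iff.2 hw
  set u' := ‖u‖⁻¹ • u with hu'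
  set v' := ‖v‖⁻¹ • v with hv'
  set w' := ‖w‖⁻¹ • w with hw'
  have hpu : (0:ℝ) < ‖u‖⁻¹ := inv_pos.2 (norm_pos_iff.2 hu)
  have hpv : (0:ℝ) < ‖v‖⁻¹ := inv_pos.2 (norm_pos_iff.2 hv)
  have hpw : (0:ℝ) < ‖w‖⁻¹ := inv_pos.2 (norm_pos_iff.2 hw)
  have e1 : InnerProductGeometry.angle u v = InnerProductGeometry.angle u' v' := by
    rw [hu', hv', angle_smul_left_of_pos _ _ hpu, angle_smul_right_of_pos _ _ hpv]
  have e2 : InnerProductGeometry.angle u w = InnerProductGeometry.angle u' w' := by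
    rw [hu', hw', angle_smul_left_of_pos _ _ hpu, angle_smul_right_of_pos _ _ hpw]
  have e3 : InnerProductGeometry.angle w v = InnerProductGeometry.angle w' v' := by
    rw [hw', hv', angle_smul_left_of_pos _ _ hpw, angle_smul_right_of_pos _ _ hpv]
  rw [e1, e2, e3]
  rw [e2, e3] at hpi
  have hnu : ‖u'‖ = 1 := by rw [hu', norm_smul, norm_inv, norm_norm, inv_mul_cancel₀ hun]
  have hnv : ‖v'‖ = 1 := by rw [hv', norm_smul, norm_inv, norm_norm, inv_mul_cancel₀ hvn]
  have hnw : ‖w'‖ = 1 := by rw [hw', norm_smul, norm_inv, norm_norm, inv_mul_cancel₀ hwn]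
  clear_value u' v' w'
  clear e1 e2 e3 hu' hv' hw' hu hv hw hun hvn hwn hpu hpv hpw
  set a := InnerProductGeometry.angle u' w' with ha
  set b := InnerProductGeometry.angle w' v' with hb
  have ha0 : 0 ≤ a := InnerProductGeometry.angle_nonneg _ _
  have hb0 : 0 ≤ b := InnerProductGeometry.angle_nonneg _ _
  have haπ : a ≤ π := InnerProductGeometry.angle_le_pi _ _
  have hbπ : b ≤ π := InnerProductGeometry.angle_le_pi _ _
  -- cosines
  have hca : Real.cos a = ⟪u', w'⟫ := by
    rw [ha, cos_angle, hnu, hnw]; simp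
  have hcb : Real.cos b = ⟪w', v'⟫ := by
    rw [hb, cos_angle, hnw, hnv]; simp
  set up := u' - ⟪u', w'⟫ • w' with hup
  set vp := v' - ⟪w', v'⟫ • w' with hvp
  have hww : ⟪w', w'⟫ = 1 := by
    rw [real_inner_self_eq_norm_sq, hnw]; norm_num
  have hnup : ‖up‖ ^ 2 = 1 - ⟪u', w'⟫ ^ 2 := by
    have := norm_sub_sq_real u' (⟪u', w'⟫ • w')
    rw [real_inner_smul_right, norm_smul, hnw] at this
    rw [hup, this, hnu]
    simp [mul_pow]
    ring
  have hnvp : ‖vp‖ ^ 2 = 1 - ⟪w', v'⟫ ^ 2 := by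
    have hcm : ⟪w', v'⟫ = ⟪v', w'⟫ := real_inner_comm _ _
    have := norm_sub_sq_real v' (⟪w', v'⟫ • w')
    rw [real_inner_smul_right, norm_smul, hnw] at this
    rw [hvp, this, hnv, hcm]
    simp [mul_pow]
    ring
  have hsa : Real.sin a = ‖up‖ := by
    have h1 : Real.sin a ^ 2 = ‖up‖ ^ 2 := by
      rw [Real.sin_sq, hca, hnup]
    have h2 : 0 ≤ Real.sin a := Real.sin_nonneg_of_nonneg_of_le_pi ha0 haπ
    nlinarith [norm_nonneg up]
  have hsb : Real.sin b = ‖vp‖ := by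
    have h1 : Real.sin b ^ 2 = ‖vp‖ ^ 2 := by
      rw [Real.sin_sq, hcb, hnvp]
    have h2 : 0 ≤ Real.sin b := Real.sin_nonneg_of_nonneg_of_le_pi hb0 hbπ
    nlinarith [norm_nonneg vp]
  have hinner : ⟪up, vp⟫ = ⟪u', v'⟫ - ⟪u', w'⟫ * ⟪w', v'⟫ := by
    rw [hup, hvp]
    simp only [inner_sub_left, inner_sub_right, real_inner_smul_left,
      real_inner_smul_right, hww]
    rw [real_inner_comm w' u']
    ring
  have hCS : -(‖up‖ * ‖vp‖) ≤ ⟪up, vp⟫ :=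
    neg_le_of_abs_le (abs_real_inner_le_norm up vp)
  have hkey : Real.cos (a + b) ≤ ⟪u', v'⟫ := by
    rw [Real.cos_add, hca, hcb, hsa, hsb]
    nlinarith [hCS, hinner]
  have hang : InnerProductGeometry.angle u' v' = Real.arccos ⟪u', v'⟫ := by
    rw [InnerProductGeometry.angle, hnu, hnv]; norm_num
  rw [hang]
  calc Real.arccos ⟪u', v'⟫ ≤ Real.arccos (Real.cos (a + b)) := by
        rw [Real.arccos, Real.arccos]
        have := Real.monotone_arcsin hkey
        linarith
    _ = a + b := Real.arccos_cos (by linarith) (le_of_lt hpi)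

/-- Lemma (Angles): three rays from a point `p` in ℝ³ satisfy the triangle
inequality for unoriented angles. -/
theorem angle_triangle_inequality
    (p x y z : EuclideanSpace ℝ (Fin 3))
    (hx : x ≠ p) (hy : y ≠ p) (hz : z ≠ p) :
    EuclideanGeometry.angle x p y ≤
      EuclideanGeometry.angle x p z + EuclideanGeometry.angle z p y := by
  unfold EuclideanGeometry.angle
  exact angle_triangle_vec (x -ᵥ p) (y -ᵥ p) (z -ᵥ p)
end

section
/- Strict angle triangle inequality for non-coplanar rays (used in Chapter 8 to show that the lateral angle of a pyramid at a base vertex strictly exceeds the base angle when the apex lies off the base plane): Let p, x, y, z be points of ℝ³ with x, y, z distinct from p. If the vectors x − p and y − p are linearly independent and z − p does not lie in the 2-dimensional linear span of x − p and y − p, then ∠xpy < ∠xpz + ∠zpy. -/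
open EuclideanGeometry

open InnerProductGeometry Real in
private lemma key_angle_lemma {V : Type*} [NormedAddCommGroup V] [InnerProductSpace ℝ V]
    (u v w : V) (hu : ‖u‖ = 1) (hv : ‖v‖ = 1) (hw : ‖w‖ = 1)
    (hind : LinearIndependent ℝ ![u, v])
    (hspan : w ∉ Submodule.span ℝ ({u, v} : Set V)) :
    InnerProductGeometry.angle u v <
      InnerProductGeometry.angle u w + InnerProductGeometry.angle w v := by
  have huv_mem : ∀ {a : V}, a ∈ ({u, v} : Set V) → a ∈ Submodule.span ℝ ({u, v} : Set V) :=
    fun h => Submodule.subset_span h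
  by_cases hπ : π < InnerProductGeometry.angle u w + InnerProductGeometry.angle w v
  · exact lt_of_le_of_lt (angle_le_pi u v) hπ
  push_neg at hπ
  set α := InnerProductGeometry.angle u w with hα
  set β := InnerProductGeometry.angle w v with hβ
  set γ := InnerProductGeometry.angle u v with hγ
  set s : ℝ := (inner ℝ u w : ℝ) with hs
  set t : ℝ := (inner ℝ w v : ℝ) with ht
  have hcosα : Real.cos α = s := by rw [hα, cos_angle, hu, hw]; simp [hs]
  have hcosβ : Real.cos β = t := by rw [hβ, cos_angle, hw, hv]; simp [ht]
  have hcosγ : Real.cos γ = (inner ℝ u v : ℝ) := by rw [hγ, cos_angle, hu, hv]; simp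
  set u' : V := u - s • w with hu'
  set v' : V := v - t • w with hv'
  have hw2 : (inner ℝ w w : ℝ) = 1 := by
    rw [real_inner_self_eq_norm_sq, hw]; norm_num
  have huu : (inner ℝ u u : ℝ) = 1 := by
    rw [real_inner_self_eq_norm_sq, hu]; norm_num
  have hvv : (inner ℝ v v : ℝ) = 1 := by
    rw [real_inner_self_eq_norm_sq, hv]; norm_num
  have hwu : (inner ℝ w u : ℝ) = s := by rw [real_inner_comm]
  have hvw : (inner ℝ v w : ℝ) = t := by rw [real_inner_comm]
  have hnu' : ‖u'‖ ^ 2 = 1 - s ^ 2 := by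
    rw [← real_inner_self_eq_norm_sq, hu']
    simp only [inner_sub_left, inner_sub_right, inner_smul_left, inner_smul_right,
      RCLike.conj_to_real, hw2, huu, hwu]
    ring
  have hnv' : ‖v'‖ ^ 2 = 1 - t ^ 2 := by
    rw [← real_inner_self_eq_norm_sq, hv']
    simp only [inner_sub_left, inner_sub_right, inner_smul_left, inner_smul_right,
      RCLike.conj_to_real, hw2, hvv, hvw]
    ring
  have hinner : (inner ℝ u v : ℝ) = s * t + (inner ℝ u' v' : ℝ) := by
    rw [hu', hv']
    simp only [inner_sub_left, inner_sub_right, inner_smul_left, inner_smul_right,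
      RCLike.conj_to_real, hw2, hwu, hvw]
    ring
  have hsinα : Real.sin α = ‖u'‖ := by
    rw [hα, sin_eq_sqrt_one_sub_cos_sq (angle_nonneg u w) (angle_le_pi u w), ← hα, hcosα, ← hnu',
      Real.sqrt_sq (norm_nonneg _)]
  have hsinβ : Real.sin β = ‖v'‖ := by
    rw [hβ, sin_eq_sqrt_one_sub_cos_sq (angle_nonneg w v) (angle_le_pi w v), ← hβ, hcosβ, ← hnv',
      Real.sqrt_sq (norm_nonneg _)]
  -- strict Cauchy–Schwarz for u', v'
  have hne : ‖-v'‖ • u' ≠ ‖u'‖ • -v' := by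
    intro heq
    rw [norm_neg, smul_neg] at heq
    -- heq : ‖v'‖ • u' = -(‖u'‖ • v')
    by_cases hu'0 : u' = 0
    · have hueq : u = s • w := by
        have h0 : u - s • w = 0 := by rw [← hu']; exact hu'0
        exact sub_eq_zero.mp h0
      have hs0 : s ≠ 0 := by
        intro h0
        rw [h0, zero_smul] at hueq
        rw [hueq, norm_zero] at hu; norm_num at hu
      exact hspan (by
        have hww : w = s⁻¹ • u := by rw [hueq, smul_smul, inv_mul_cancel₀ hs0, one_smul]
        rw [hww]
        exact Submodule.smul_mem _ _ (huv_mem (Set.mem_insert _ _)))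
    by_cases hv'0 : v' = 0
    · have hveq : v = t • w := by
        have h0 : v - t • w = 0 := by rw [← hv']; exact hv'0
        exact sub_eq_zero.mp h0
      have ht0 : t ≠ 0 := by
        intro h0
        rw [h0, zero_smul] at hveq
        rw [hveq, norm_zero] at hv; norm_num at hv
      exact hspan (by
        have hww : w = t⁻¹ • v := by rw [hveq, smul_smul, inv_mul_cancel₀ ht0, one_smul]
        rw [hww]
        exact Submodule.smul_mem _ _ (huv_mem (Set.mem_insert_of_mem _ rfl)))
    · have hnu'0 : (0:ℝ) < ‖u'‖ := norm_pos_iff.mpr hu'0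
      have hnv'0 : (0:ℝ) < ‖v'‖ := norm_pos_iff.mpr hv'0
      set r : ℝ := ‖v'‖ / ‖u'‖ with hr
      have hrpos : 0 < r := div_pos hnv'0 hnu'0
      have h2 : ‖u'‖ • v' = -(‖v'‖ • u') := by
        have := congrArg (fun z : V => -z) heq
        simpa using this.symm
      have h1 : v' = -(r • u') := by
        calc v' = ‖u'‖⁻¹ • (‖u'‖ • v') := by
              rw [smul_smul, inv_mul_cancel₀ hnu'0.ne', one_smul]
          _ = -((‖u'‖⁻¹ * ‖v'‖) • u') := by rw [h2, smul_neg, smul_smul]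
          _ = -(r • u') := by rw [inv_mul_eq_div]
      have hz : r • u' + v' = 0 := by rw [h1]; abel
      set k : ℝ := r * s + t with hk
      have hueq : u = s • w + u' := by rw [hu']; abel
      have hveq : v = t • w + v' := by rw [hv']; abel
      have hkw : r • u + v = k • w := by
        have hexp : r • (s • w + u') + (t • w + v') = (r * s + t) • w + (r • u' + v') := by
          module
        rw [hueq, hveq, hexp, hz, add_zero, hk]
      by_cases hk0 : k = 0
      · rw [hk0, zero_smul] at hkw
        have hv2 : v = (-r) • u := by
          rw [neg_smul, ← eq_neg_of_add_eq_zero_right hkw]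
        obtain ⟨-, h02⟩ := linearIndependent_fin2.mp hind
        apply h02 ((-r)⁻¹)
        simp only [Matrix.cons_val_one, Matrix.head_cons, Matrix.cons_val_zero]
        rw [hv2, smul_smul, inv_mul_cancel₀ (neg_ne_zero.mpr hrpos.ne'), one_smul]
      · apply hspan
        have hww : w = k⁻¹ • (r • u + v) := by
          rw [hkw, smul_smul, inv_mul_cancel₀ hk0, one_smul]
        rw [hww]
        exact Submodule.smul_mem _ _ (Submodule.add_mem _
          (Submodule.smul_mem _ _ (huv_mem (Set.mem_insert _ _)))
          (huv_mem (Set.mem_insert_of_mem _ rfl)))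
  have hCS : -(‖u'‖ * ‖v'‖) < (inner ℝ u' v' : ℝ) := by
    have h := inner_lt_norm_mul_iff_real (F := V) (x := u') (y := -v') |>.mpr hne
    rw [inner_neg_right, norm_neg] at h
    linarith
  have hkey : Real.cos (α + β) < Real.cos γ := by
    rw [Real.cos_add, hcosα, hcosβ, hsinα, hsinβ, hcosγ, hinner]
    linarith
  have h1 : α + β ∈ Set.Icc 0 π := ⟨add_nonneg (angle_nonneg u w) (angle_nonneg w v), hπ⟩
  have h2 : γ ∈ Set.Icc 0 π := ⟨angle_nonneg u v, angle_le_pi u v⟩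
  by_contra hcon
  push_neg at hcon
  rcases eq_or_lt_of_le hcon with h | h
  · rw [h] at hkey; exact lt_irrefl _ hkey
  · exact absurd (Real.strictAntiOn_cos h1 h2 h) (asymm hkey)

/-- Strict angle triangle inequality for non-coplanar rays: if `x - p` and `y - p`
are linearly independent and `z - p` does not lie in their span, then
`∠ x p y < ∠ x p z + ∠ z p y`. -/
theorem angle_triangle_inequality_strict
    (p x y z : EuclideanSpace ℝ (Fin 3))
    (hx : x ≠ p) (hy : y ≠ p) (hz : z ≠ p)
    (hxy : LinearIndependent ℝ ![x - p, y - p])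
    (hspan : z - p ∉ Submodule.span ℝ ({x - p, y - p} : Set (EuclideanSpace ℝ (Fin 3)))) :
    EuclideanGeometry.angle x p y <
      EuclideanGeometry.angle x p z + EuclideanGeometry.angle z p y := by
  set a := x - p with hadef
  set b := y - p with hbdef
  set c := z - p with hcdef
  have ha : a ≠ 0 := sub_ne_zero.mpr hx
  have hb : b ≠ 0 := sub_ne_zero.mpr hy
  have hc : c ≠ 0 := sub_ne_zero.mpr hz
  have hna : (0:ℝ) < ‖a‖ := norm_pos_iff.mpr ha
  have hnb : (0:ℝ) < ‖b‖ := norm_pos_iff.mpr hb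
  have hnc : (0:ℝ) < ‖c‖ := norm_pos_iff.mpr hc
  set u := ‖a‖⁻¹ • a with hudef
  set v := ‖b‖⁻¹ • b with hvdef
  set w := ‖c‖⁻¹ • c with hwdef
  have hu : ‖u‖ = 1 := norm_smul_inv_norm ha
  have hv : ‖v‖ = 1 := norm_smul_inv_norm hb
  have hw : ‖w‖ = 1 := norm_smul_inv_norm hc
  have hind : LinearIndependent ℝ ![u, v] := by
    rw [linearIndependent_fin2]
    simp only [Matrix.cons_val_one, Matrix.head_cons, Matrix.cons_val_zero]
    rw [linearIndependent_fin2] at hxy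
    simp only [Matrix.cons_val_one, Matrix.head_cons, Matrix.cons_val_zero] at hxy
    obtain ⟨-, h02⟩ := hxy
    constructor
    · exact smul_ne_zero (inv_ne_zero hnb.ne') hb
    · intro r hr
      apply h02 (‖a‖ * (r * ‖b‖⁻¹))
      calc (‖a‖ * (r * ‖b‖⁻¹)) • b = ‖a‖ • (r • (‖b‖⁻¹ • b)) := by
            rw [smul_smul, smul_smul, mul_assoc]
        _ = ‖a‖ • (‖a‖⁻¹ • a) := by rw [hr]
        _ = a := by rw [smul_smul, mul_inv_cancel₀ hna.ne', one_smul]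
  have hsub : Submodule.span ℝ ({u, v} : Set (EuclideanSpace ℝ (Fin 3))) ≤
      Submodule.span ℝ ({a, b} : Set (EuclideanSpace ℝ (Fin 3))) := by
    rw [Submodule.span_le]
    rintro m (rfl | rfl)
    · exact Submodule.smul_mem _ _ (Submodule.subset_span (Set.mem_insert _ _))
    · exact Submodule.smul_mem _ _ (Submodule.subset_span (Set.mem_insert_of_mem _ rfl))
  have hspan' : w ∉ Submodule.span ℝ ({u, v} : Set (EuclideanSpace ℝ (Fin 3))) := by
    intro hmem
    apply hspan
    have hceq : c = ‖c‖ • w := by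
      rw [hwdef, smul_smul, mul_inv_cancel₀ hnc.ne', one_smul]
    rw [hceq]
    exact Submodule.smul_mem _ _ (hsub hmem)
  have hkey := key_angle_lemma u v w hu hv hw hind hspan'
  have e1 : EuclideanGeometry.angle x p y = InnerProductGeometry.angle u v := by
    have h0 : EuclideanGeometry.angle x p y = InnerProductGeometry.angle a b := rfl
    rw [h0, hudef, hvdef,
      InnerProductGeometry.angle_smul_left_of_pos _ _ (inv_pos.mpr hna),
      InnerProductGeometry.angle_smul_right_of_pos _ _ (inv_pos.mpr hnb)]
  have e2 : EuclideanGeometry.angle x p z = InnerProductGeometry.angle u w := by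
    have h0 : EuclideanGeometry.angle x p z = InnerProductGeometry.angle a c := rfl
    rw [h0, hudef, hwdef,
      InnerProductGeometry.angle_smul_left_of_pos _ _ (inv_pos.mpr hna),
      InnerProductGeometry.angle_smul_right_of_pos _ _ (inv_pos.mpr hnc)]
  have e3 : EuclideanGeometry.angle z p y = InnerProductGeometry.angle w v := by
    have h0 : EuclideanGeometry.angle z p y = InnerProductGeometry.angle c b := rfl
    rw [h0, hwdef, hvdef,
      InnerProductGeometry.angle_smul_left_of_pos _ _ (inv_pos.mpr hnc),
      InnerProductGeometry.angle_smul_right_of_pos _ _ (inv_pos.mpr hnb)]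
  rw [e1, e2, e3]
  exact hkey
end

section
/- Lemma (Altitude, Lemma 8.2): Let Π be a plane (2-dimensional affine subspace) in ℝ³, let a ≠ b be points of Π, and let c be a point not in Π. Let c̄ be the orthogonal projection of c onto Π, and let cʳ be any point of Π with dist(a, cʳ) = dist(a, c) and dist(b, cʳ) = dist(b, c) (the triangle abc rotated into Π about the line ab). Then c, c̄, and cʳ all have the same orthogonal projection q onto the line through a and b; equivalently, c̄ and cʳ both lie on the line in Π through the foot q of the altitude of triangle abc, perpendicular to the line ab. -/
open EuclideanGeometry

lemma proj_eq_of_vsub_mem_orthogonal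
    {V P : Type*} [NormedAddCommGroup V] [InnerProductSpace ℝ V] [MetricSpace P]
    [NormedAddTorsor V P] (s : AffineSubspace ℝ P) [Nonempty s]
    [s.direction.HasOrthogonalProjection] {p q : P}
    (h : p -ᵥ q ∈ s.directionᗮ) :
    orthogonalProjection s p = orthogonalProjection s q := by
  have : p = (p -ᵥ q) +ᵥ q := (vsub_vadd p q).symm
  have hz : Submodule.orthogonalProjectionOnto s.direction (p -ᵥ q) = 0 :=
    Submodule.orthogonalProjectionOnto_eq_zero_iff.2 h
  rw [this, ContinuousAffineMap.map_vadd, orthogonalProjection_contLinear]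
  simp [hz]

/-- Lemma (Altitude): let `Pl` be a plane in ℝ³ containing `a ≠ b`, let `c ∉ Pl`,
let `c̄` be the orthogonal projection of `c` onto `Pl`, and let `cʳ ∈ Pl` satisfy
`dist a cʳ = dist a c` and `dist b cʳ = dist b c` (the triangle `abc` rotated
into `Pl` about the line `ab`).  Then `c`, `c̄` and `cʳ` all have the same
orthogonal projection onto the line through `a` and `b`. -/
theorem altitude_lemma
    (Pl : AffineSubspace ℝ (EuclideanSpace ℝ (Fin 3))) [Nonempty Pl]
    (hPl : Module.finrank ℝ Pl.direction = 2)
    (a b c cr : EuclideanSpace ℝ (Fin 3))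
    (ha : a ∈ Pl) (hb : b ∈ Pl) (hab : a ≠ b)
    (hc : c ∉ Pl) (hcr : cr ∈ Pl)
    (hra : dist a cr = dist a c) (hrb : dist b cr = dist b c) :
    orthogonalProjection (affineSpan ℝ {a, b}) c =
        orthogonalProjection (affineSpan ℝ {a, b})
          ((orthogonalProjection Pl c : EuclideanSpace ℝ (Fin 3))) ∧
      orthogonalProjection (affineSpan ℝ {a, b}) cr =
        orthogonalProjection (affineSpan ℝ {a, b})
          ((orthogonalProjection Pl c : EuclideanSpace ℝ (Fin 3))) := by
  haveI : Nonempty (affineSpan ℝ ({a, b} : Set (EuclideanSpace ℝ (Fin 3)))) :=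
    ⟨⟨a, mem_affineSpan ℝ (by simp)⟩⟩
  have hdir : (affineSpan ℝ ({a, b} : Set (EuclideanSpace ℝ (Fin 3)))).direction
      = ℝ ∙ (b -ᵥ a) := by
    rw [direction_affineSpan, vectorSpan_pair_rev]
  constructor
  · apply proj_eq_of_vsub_mem_orthogonal
    rw [hdir, Submodule.mem_orthogonal_singleton_iff_inner_right]
    have h1 : c -ᵥ (orthogonalProjection Pl c : EuclideanSpace ℝ (Fin 3))
        ∈ Pl.directionᗮ := vsub_orthogonalProjection_mem_direction_orthogonal Pl c
    exact h1 _ (AffineSubspace.vsub_mem_direction hb ha)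
  · apply proj_eq_of_vsub_mem_orthogonal
    have h2 : cr -ᵥ (orthogonalProjection Pl c : EuclideanSpace ℝ (Fin 3))
        = (cr -ᵥ c) + (c -ᵥ (orthogonalProjection Pl c : EuclideanSpace ℝ (Fin 3))) :=
      (vsub_add_vsub_cancel cr c _).symm
    rw [hdir, h2]
    refine Submodule.add_mem _ ?_ ?_
    · rw [Submodule.mem_orthogonal_singleton_iff_inner_right]
      exact inner_vsub_vsub_of_dist_eq_of_dist_eq (c₁ := a) (c₂ := b) (p₁ := c) (p₂ := cr)
        (by rw [dist_comm c a, dist_comm cr a]; exact hra.symm)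
        (by rw [dist_comm c b, dist_comm cr b]; exact hrb.symm)
    · rw [Submodule.mem_orthogonal_singleton_iff_inner_right]
      have h1 : c -ᵥ (orthogonalProjection Pl c : EuclideanSpace ℝ (Fin 3))
          ∈ Pl.directionᗮ := vsub_orthogonalProjection_mem_direction_orthogonal Pl c
      exact h1 _ (AffineSubspace.vsub_mem_direction hb ha)
end

section
/- Altitude-turn lemma (Lemma 8.3(b)): Let a, b, c, v be points of ℝ² with a ≠ b and b ≠ c, and suppose v lies strictly to the left of the directed line through a, b and strictly to the left of the directed line through b, c. Let f₁ and f₂ be the orthogonal projections (altitude feet) of v onto the lines through a, b and through b, c respectively. Then f₁ ≠ v and f₂ ≠ v, and the oriented angle from f₁ − v to f₂ − v equals the oriented turn angle from b − a to c − b; i.e., the angle between the two altitudes at v equals the turn angle of the chain a, b, c at b. -/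
noncomputable section

open EuclideanGeometry

/-- The standard orientation of the Euclidean plane `EuclideanSpace ℝ (Fin 2)`. -/
def stdOrientation : Orientation ℝ (EuclideanSpace ℝ (Fin 2)) (Fin 2) :=
  (EuclideanSpace.basisFun (Fin 2) ℝ).toBasis.orientation

instance : Fact (Module.finrank ℝ (EuclideanSpace ℝ (Fin 2)) = 2) :=
  ⟨finrank_euclideanSpace_fin⟩

/-- If the inner product vanishes and the oriented area is negative, the oriented
angle is `-π/2`. -/
lemma oangle_eq_neg_pi_div_two_of
    (o : Orientation ℝ (EuclideanSpace ℝ (Fin 2)) (Fin 2))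
    {u w : EuclideanSpace ℝ (Fin 2)}
    (h1 : inner ℝ u w = (0 : ℝ)) (h2 : o.areaForm u w < 0) :
    o.oangle u w = ((-(Real.pi / 2) : ℝ) : Real.Angle) := by
  unfold Orientation.oangle
  congr 1
  rw [Complex.arg_eq_neg_pi_div_two_iff]
  simp [Orientation.kahler_apply_apply, h1, h2]

/-- The foot of the altitude from a point strictly to the left of the directed
line through `a, b`: the foot differs from `v`, and the oriented angle from the
line direction to the altitude vector is `-π/2`. -/
lemma foot_facts (a b v : EuclideanSpace ℝ (Fin 2))
    (hv1 : 0 < stdOrientation.areaForm (b - a) (v - a)) :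
    (orthogonalProjection (affineSpan ℝ {a, b}) v : EuclideanSpace ℝ (Fin 2)) ≠ v ∧
    stdOrientation.oangle (b - a)
      ((orthogonalProjection (affineSpan ℝ {a, b}) v : EuclideanSpace ℝ (Fin 2)) - v) =
      ((-(Real.pi / 2) : ℝ) : Real.Angle) := by
  set f := (orthogonalProjection (affineSpan ℝ {a, b}) v : EuclideanSpace ℝ (Fin 2)) with hf
  have hdir : (affineSpan ℝ ({a, b} : Set (EuclideanSpace ℝ (Fin 2)))).direction
      = ℝ ∙ (b - a) := by
    rw [direction_affineSpan, vectorSpan_pair_rev, vsub_eq_sub]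
  have hperp : v - f ∈ (ℝ ∙ (b - a))ᗮ := by
    rw [← hdir]
    simpa [vsub_eq_sub] using
      vsub_orthogonalProjection_mem_direction_orthogonal (affineSpan ℝ {a, b}) v
  have hinner : inner ℝ (b - a) (f - v) = (0 : ℝ) := by
    have h := hperp (b - a) (Submodule.mem_span_singleton_self _)
    have : (f : EuclideanSpace ℝ (Fin 2)) - v = -(v - f) := by abel
    rw [this, inner_neg_right, h, neg_zero]
  have hmem : f ∈ affineSpan ℝ ({a, b} : Set (EuclideanSpace ℝ (Fin 2))) :=
    orthogonalProjection_mem v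
  have hfa : f - a ∈ ℝ ∙ (b - a) := by
    rw [← hdir]
    simpa [vsub_eq_sub] using
      AffineSubspace.vsub_mem_direction hmem
        (mem_affineSpan ℝ (Set.mem_insert a {b}))
  obtain ⟨s, hs⟩ := Submodule.mem_span_singleton.mp hfa
  have harea : stdOrientation.areaForm (b - a) (f - v) < 0 := by
    have hfv : f - v = (f - a) - (v - a) := by abel
    rw [hfv, map_sub, ← hs, map_smul]
    simp only [Orientation.areaForm_apply_self, smul_eq_mul, mul_zero, zero_sub, neg_neg]
    linarith
  refine ⟨?_, oangle_eq_neg_pi_div_two_of _ hinner harea⟩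
  intro hfe
  rw [hfe] at harea
  simp at harea

/-- Altitude-turn lemma: if `v` lies strictly to the left of the directed lines
through `a, b` and through `b, c`, and `f₁`, `f₂` are the feet of the altitudes
from `v` to those two lines, then `f₁ ≠ v`, `f₂ ≠ v`, and the oriented angle
from `f₁ - v` to `f₂ - v` equals the oriented turn angle from `b - a` to `c - b`. -/
theorem altitude_turn
    (a b c v : EuclideanSpace ℝ (Fin 2))
    (hab : a ≠ b) (hbc : b ≠ c)
    (hv1 : 0 < stdOrientation.areaForm (b - a) (v - a))
    (hv2 : 0 < stdOrientation.areaForm (c - b) (v - b)) :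
    (orthogonalProjection (affineSpan ℝ {a, b}) v : EuclideanSpace ℝ (Fin 2)) ≠ v ∧
    (orthogonalProjection (affineSpan ℝ {b, c}) v : EuclideanSpace ℝ (Fin 2)) ≠ v ∧
    stdOrientation.oangle
        ((orthogonalProjection (affineSpan ℝ {a, b}) v : EuclideanSpace ℝ (Fin 2)) - v)
        ((orthogonalProjection (affineSpan ℝ {b, c}) v : EuclideanSpace ℝ (Fin 2)) - v) =
      stdOrientation.oangle (b - a) (c - b) := by
  obtain ⟨h1ne, h1⟩ := foot_facts a b v hv1
  obtain ⟨h2ne, h2⟩ := foot_facts b c v hv2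
  refine ⟨h1ne, h2ne, ?_⟩
  set f₁ := (orthogonalProjection (affineSpan ℝ {a, b}) v : EuclideanSpace ℝ (Fin 2))
  set f₂ := (orthogonalProjection (affineSpan ℝ {b, c}) v : EuclideanSpace ℝ (Fin 2))
  have hu1 : b - a ≠ 0 := sub_ne_zero.mpr hab.symm
  have hu2 : c - b ≠ 0 := sub_ne_zero.mpr hbc.symm
  have hw1 : f₁ - v ≠ 0 := sub_ne_zero.mpr h1ne
  have hw2 : f₂ - v ≠ 0 := sub_ne_zero.mpr h2ne
  have e1 : stdOrientation.oangle (f₁ - v) (f₂ - v) =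
      stdOrientation.oangle (f₁ - v) (b - a) + stdOrientation.oangle (b - a) (f₂ - v) :=
    (stdOrientation.oangle_add hw1 hu1 hw2).symm
  have e2 : stdOrientation.oangle (b - a) (f₂ - v) =
      stdOrientation.oangle (b - a) (c - b) + stdOrientation.oangle (c - b) (f₂ - v) :=
    (stdOrientation.oangle_add hu1 hu2 hw2).symm
  have e3 : stdOrientation.oangle (f₁ - v) (b - a) =
      -stdOrientation.oangle (b - a) (f₁ - v) := stdOrientation.oangle_rev _ _
  rw [e1, e2, e3, h1, h2]
  abel
end
end

section
/- Lemma (Width, Lemma 15.4): Let V be a finite set of points in ℝ² not all contained in one line, and let K = conv V. Then the width of K is achieved by an edge–vertex pair with the vertex projecting onto the edge: there exist a, b ∈ V with a ≠ b and the segment [a,b] contained in the frontier of K (an edge of K), a point c ∈ V, and a point q in the segment [a,b] with c − q perpendicular to b − a, such that dist(c, q) equals the width of K. -/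
noncomputable section

open scoped RealInnerProductSpace

/-- The width of a set `K` in the plane: the infimum over unit directions `u`
of the support width `sup_{x∈K} ⟪x,u⟫ − inf_{x∈K} ⟪x,u⟫`, i.e. the shortest
distance between two parallel supporting lines. -/
def width (K : Set (EuclideanSpace ℝ (Fin 2))) : ℝ :=
  ⨅ u : {u : EuclideanSpace ℝ (Fin 2) // ‖u‖ = 1},
    (sSup ((fun x => ⟪x, (u : EuclideanSpace ℝ (Fin 2))⟫) '' K) -
      sInf ((fun x => ⟪x, (u : EuclideanSpace ℝ (Fin 2))⟫) '' K))

set_option maxHeartbeats 1000000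

open Finset

namespace WidthAux

abbrev E2 := EuclideanSpace ℝ (Fin 2)

lemma inner_eq (x y : E2) : ⟪x, y⟫ = x 0 * y 0 + x 1 * y 1 := by
  simp [PiLp.inner_apply, Fin.sum_univ_two, RCLike.inner_apply]; ring

/-- rotation by 90 degrees -/
def rot (u : E2) : E2 := (WithLp.equiv 2 (Fin 2 → ℝ)).symm ![-(u 1), u 0]

lemma rot_apply0 (u : E2) : rot u 0 = -(u 1) := rfl
lemma rot_apply1 (u : E2) : rot u 1 = u 0 := rfl

lemma sq_sum (u : E2) (h : ‖u‖ = 1) : u 0 ^ 2 + u 1 ^ 2 = 1 := by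
  have := real_inner_self_eq_norm_sq u
  rw [h, inner_eq] at this
  nlinarith [this]

lemma inner_rot_self (u : E2) : ⟪u, rot u⟫ = 0 := by
  rw [inner_eq, rot_apply0, rot_apply1]; ring

lemma inner_rot_self' (u : E2) : ⟪rot u, u⟫ = 0 := by
  rw [real_inner_comm]; exact inner_rot_self u

lemma inner_rot_rot (u : E2) (h : ‖u‖ = 1) : ⟪rot u, rot u⟫ = 1 := by
  rw [inner_eq, rot_apply0, rot_apply1]
  have := sq_sum u h; nlinarith

lemma rot_neg (u : E2) : rot (-u) = -rot u := by
  ext i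
  fin_cases i <;> simp [rot]

lemma decomp (u : E2) (h : ‖u‖ = 1) (x : E2) :
    x = ⟪x, u⟫ • u + ⟪x, rot u⟫ • rot u := by
  have hs := sq_sum u h
  ext i
  fin_cases i
  · simp [inner_eq, rot_apply0, rot_apply1, PiLp.add_apply, PiLp.smul_apply, smul_eq_mul]
    linear_combination (-(x 0)) * hs
  · simp [inner_eq, rot_apply0, rot_apply1, PiLp.add_apply, PiLp.smul_apply, smul_eq_mul]
    linear_combination (-(x 1)) * hs

lemma inj (u : E2) (h : ‖u‖ = 1) {x y : E2}
    (h1 : ⟪x, u⟫ = ⟪y, u⟫) (h2 : ⟪x, rot u⟫ = ⟪y, rot u⟫) : x = y := by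
  rw [decomp u h x, decomp u h y, h1, h2]

lemma norm_add_smul_rot (u : E2) (h : ‖u‖ = 1) (ε : ℝ) :
    ‖u + ε • rot u‖ = Real.sqrt (1 + ε ^ 2) := by
  have h1 : ⟪u + ε • rot u, u + ε • rot u⟫ = 1 + ε ^ 2 := by
    rw [inner_add_add_self, real_inner_smul_left, real_inner_smul_right,
      real_inner_smul_left, real_inner_smul_right, inner_rot_self, inner_rot_self',
      inner_rot_rot u h, real_inner_self_eq_norm_sq, h]
    ring
  rw [← Real.sqrt_sq (norm_nonneg (u + ε • rot u)), ← real_inner_self_eq_norm_sq, h1]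

-- continuing namespace WidthAux

lemma inner_isLinear (u : E2) : IsLinearMap ℝ (fun x : E2 => ⟪x, u⟫) :=
  ⟨fun a b => inner_add_left a b u, fun c a => real_inner_smul_left a u c⟩

lemma inner_le_sup' (V : Finset E2) (hne : V.Nonempty) (u : E2) {x : E2}
    (hx : x ∈ convexHull ℝ (V : Set E2)) :
    ⟪x, u⟫ ≤ V.sup' hne (fun y => ⟪y, u⟫) := by
  have : convexHull ℝ (V : Set E2) ⊆ {y : E2 | ⟪y, u⟫ ≤ V.sup' hne (fun y => ⟪y, u⟫)} :=
    convexHull_min (fun y hy => show ⟪y,u⟫ ≤ _ from le_sup' (fun y : E2 => ⟪y,u⟫) (by exact_mod_cast hy))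
      (convex_halfSpace_le (inner_isLinear u) _)
  exact this hx

lemma inf'_le_inner (V : Finset E2) (hne : V.Nonempty) (u : E2) {x : E2}
    (hx : x ∈ convexHull ℝ (V : Set E2)) :
    V.inf' hne (fun y => ⟪y, u⟫) ≤ ⟪x, u⟫ := by
  have : convexHull ℝ (V : Set E2) ⊆ {y : E2 | V.inf' hne (fun y => ⟪y, u⟫) ≤ ⟪y, u⟫} :=
    convexHull_min (fun y hy => show _ ≤ ⟪y,u⟫ from inf'_le (fun y : E2 => ⟪y,u⟫) (by exact_mod_cast hy))
      (convex_halfSpace_ge (inner_isLinear u) _)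
  exact this hx

lemma sSup_image (V : Finset E2) (hne : V.Nonempty) (u : E2) :
    sSup ((fun x => ⟪x, u⟫) '' (convexHull ℝ (V : Set E2))) =
      V.sup' hne (fun y => ⟪y, u⟫) := by
  obtain ⟨a, ha, hmax⟩ := V.exists_mem_eq_sup' hne (fun y => ⟪y, u⟫)
  have haK : a ∈ convexHull ℝ (V : Set E2) := subset_convexHull ℝ _ (by exact_mod_cast ha)
  apply le_antisymm
  · exact csSup_le ⟨_, ⟨a, haK, rfl⟩⟩ (by rintro y ⟨x, hx, rfl⟩; exact inner_le_sup' V hne u hx)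
  · rw [hmax]
    exact le_csSup ⟨_, by rintro y ⟨x, hx, rfl⟩; exact inner_le_sup' V hne u hx⟩ ⟨a, haK, rfl⟩

lemma sInf_image (V : Finset E2) (hne : V.Nonempty) (u : E2) :
    sInf ((fun x => ⟪x, u⟫) '' (convexHull ℝ (V : Set E2))) =
      V.inf' hne (fun y => ⟪y, u⟫) := by
  obtain ⟨a, ha, hmin⟩ := V.exists_mem_eq_inf' hne (fun y => ⟪y, u⟫)
  have haK : a ∈ convexHull ℝ (V : Set E2) := subset_convexHull ℝ _ (by exact_mod_cast ha)
  apply le_antisymm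
  · rw [hmin]
    exact csInf_le ⟨_, by rintro y ⟨x, hx, rfl⟩; exact inf'_le_inner V hne u hx⟩ ⟨a, haK, rfl⟩
  · exact le_csInf ⟨_, ⟨a, haK, rfl⟩⟩ (by rintro y ⟨x, hx, rfl⟩; exact inf'_le_inner V hne u hx)

/-- the width functional in terms of vertices -/
def G (V : Finset E2) (hne : V.Nonempty) (u : E2) : ℝ :=
  V.sup' hne (fun y => ⟪y, u⟫) - V.inf' hne (fun y => ⟪y, u⟫)

lemma G_nonneg (V : Finset E2) (hne : V.Nonempty) (u : E2) : 0 ≤ G V hne u := by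
  obtain ⟨a, ha⟩ := hne
  exact sub_nonneg.2 (le_trans (inf'_le _ ha) (le_sup' (fun y => ⟪y,u⟫) ha))

lemma width_eq (V : Finset E2) (hne : V.Nonempty) :
    width (convexHull ℝ (V : Set E2)) =
      ⨅ u : {u : E2 // ‖u‖ = 1}, G V hne (u : E2) := by
  unfold width G
  congr 1
  funext u
  rw [sSup_image V hne, sInf_image V hne]

lemma exists_unit : ∃ u : E2, ‖u‖ = 1 := by
  refine ⟨EuclideanSpace.single 0 1, ?_⟩
  simp [EuclideanSpace.norm_single]

lemma exists_min (V : Finset E2) (hne : V.Nonempty) :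
    ∃ u : E2, ‖u‖ = 1 ∧ ∀ u' : E2, ‖u'‖ = 1 → G V hne u ≤ G V hne u' := by
  have hcont : Continuous fun u : E2 => G V hne u := by
    unfold G
    apply Continuous.sub
    · exact Continuous.finset_sup'_apply hne fun x _ => (innerSL ℝ x).continuous
    · exact Continuous.finset_inf'_apply hne fun x _ => (innerSL ℝ x).continuous
  obtain ⟨u₀, hu₀⟩ := exists_unit
  obtain ⟨u, humem, hmin⟩ := (isCompact_sphere (0 : E2) 1).exists_isMinOn
    ⟨u₀, by simpa using hu₀⟩ hcont.continuousOn
  have hu : ‖u‖ = 1 := by simpa using humem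
  exact ⟨u, hu, fun u' hu' => hmin (by simpa using hu' : u' ∈ Metric.sphere (0 : E2) 1)⟩

lemma width_eq_min (V : Finset E2) (hne : V.Nonempty) {u : E2} (hu : ‖u‖ = 1)
    (hmin : ∀ u' : E2, ‖u'‖ = 1 → G V hne u ≤ G V hne u') :
    width (convexHull ℝ (V : Set E2)) = G V hne u := by
  have hnein : Nonempty {u : E2 // ‖u‖ = 1} := ⟨⟨u, hu⟩⟩
  have hbdd : BddBelow (Set.range fun u' : {u : E2 // ‖u‖ = 1} => G V hne (u' : E2)) := by
    refine ⟨0, ?_⟩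
    rintro y ⟨w, rfl⟩
    exact G_nonneg V hne _
  rw [width_eq V hne]
  apply le_antisymm
  · exact ciInf_le hbdd ⟨u, hu⟩
  · exact le_ciInf fun u' => hmin u' u'.2

lemma width_le (V : Finset E2) (hne : V.Nonempty) {u : E2} (hu : ‖u‖ = 1) :
    width (convexHull ℝ (V : Set E2)) ≤ G V hne u := by
  have hnein : Nonempty {u : E2 // ‖u‖ = 1} := ⟨⟨u, hu⟩⟩
  have hbdd : BddBelow (Set.range fun u' : {u : E2 // ‖u‖ = 1} => G V hne (u' : E2)) := by
    refine ⟨0, ?_⟩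
    rintro y ⟨w, rfl⟩
    exact G_nonneg V hne _
  rw [width_eq V hne]
  exact ciInf_le hbdd ⟨u, hu⟩

lemma pert (V : Finset E2) (hne : V.Nonempty) {u : E2} (hu : ‖u‖ = 1) (ε : ℝ) :
    Real.sqrt (1 + ε ^ 2) * width (convexHull ℝ (V : Set E2)) ≤
      V.sup' hne (fun x => ⟪x, u⟫ + ε * ⟪x, rot u⟫) -
        V.inf' hne (fun x => ⟪x, u⟫ + ε * ⟪x, rot u⟫) := by
  set s := Real.sqrt (1 + ε ^ 2) with hs
  have hs0 : 0 < s := Real.sqrt_pos.2 (by positivity)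
  set w : E2 := s⁻¹ • (u + ε • rot u) with hw
  have hwu : ‖w‖ = 1 := by
    rw [hw, norm_smul, norm_add_smul_rot u hu ε, ← hs, Real.norm_eq_abs,
      abs_of_pos (inv_pos.2 hs0), inv_mul_cancel₀ (ne_of_gt hs0)]
  have hinner : ∀ x : E2, ⟪x, w⟫ = s⁻¹ * (⟪x, u⟫ + ε * ⟪x, rot u⟫) := by
    intro x
    rw [hw, real_inner_smul_right, inner_add_right, real_inner_smul_right]
  have hGw : G V hne w = s⁻¹ * (V.sup' hne (fun x => ⟪x, u⟫ + ε * ⟪x, rot u⟫) -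
      V.inf' hne (fun x => ⟪x, u⟫ + ε * ⟪x, rot u⟫)) := by
    have hsup : V.sup' hne (fun x => ⟪x, w⟫) =
        s⁻¹ * V.sup' hne (fun x => ⟪x, u⟫ + ε * ⟪x, rot u⟫) := by
      rw [comp_sup'_eq_sup'_comp hne (g := fun z => s⁻¹ * z)
        (fun x y => mul_max_of_nonneg x y (le_of_lt (inv_pos.2 hs0)))]
      exact sup'_congr hne rfl (fun x _ => hinner x)
    have hinf : V.inf' hne (fun x => ⟪x, w⟫) =
        s⁻¹ * V.inf' hne (fun x => ⟪x, u⟫ + ε * ⟪x, rot u⟫) := by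
      rw [apply_inf'_eq_inf'_comp hne (g := fun z => s⁻¹ * z)
        (fun x y => mul_min_of_nonneg x y (le_of_lt (inv_pos.2 hs0)))]
      exact inf'_congr hne rfl (fun x _ => hinner x)
    rw [G, hsup, hinf]; ring
  have h1 := width_le V hne hwu
  rw [hGw] at h1
  calc s * width (convexHull ℝ (V : Set E2)) ≤ s * (s⁻¹ * _) :=
        mul_le_mul_of_nonneg_left h1 (le_of_lt hs0)
    _ = _ := by field_simp

section EvalLemmas

variable {α : Type*} (B : Finset α) (hB : B.Nonempty) (t : α → ℝ) (c ε : ℝ)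

lemma sup'_neg' : B.sup' hB (fun x => -t x) = -B.inf' hB t := by
  apply le_antisymm
  · exact sup'_le _ _ fun x hx => neg_le_neg (inf'_le _ hx)
  · rw [neg_le]
    exact le_inf' _ _ fun x hx => neg_le.mpr (le_sup' (fun x => -t x) hx)

lemma inf'_neg' : B.inf' hB (fun x => -t x) = -B.sup' hB t := by
  have := sup'_neg' B hB (fun x => -t x)
  simp only [neg_neg] at this
  rw [this, neg_neg]

lemma sup'_add_mul_nonneg (hε : 0 ≤ ε) :
    B.sup' hB (fun x => c + ε * t x) = c + ε * B.sup' hB t := by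
  refine (comp_sup'_eq_sup'_comp hB (g := fun z => c + ε * z) (f := t) fun x y => ?_).symm
  rcases le_total x y with h | h
  · rw [max_eq_right h, max_eq_right (by nlinarith [mul_le_mul_of_nonneg_left h hε])]
  · rw [max_eq_left h, max_eq_left (by nlinarith [mul_le_mul_of_nonneg_left h hε])]

lemma inf'_add_mul_nonneg (hε : 0 ≤ ε) :
    B.inf' hB (fun x => c + ε * t x) = c + ε * B.inf' hB t := by
  refine (apply_inf'_eq_inf'_comp hB (g := fun z => c + ε * z) (f := t) fun x y => ?_).symm
  rcases le_total x y with h | h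
  · rw [min_eq_left h, min_eq_left (by nlinarith [mul_le_mul_of_nonneg_left h hε])]
  · rw [min_eq_right h, min_eq_right (by nlinarith [mul_le_mul_of_nonneg_left h hε])]

lemma sup'_add_mul_nonpos (hε : ε ≤ 0) :
    B.sup' hB (fun x => c + ε * t x) = c + ε * B.inf' hB t := by
  have h1 : (fun x => c + ε * t x) = fun x => c + (-ε) * (-t x) := by
    funext x; ring
  rw [h1, sup'_add_mul_nonneg B hB _ c (-ε) (by linarith), sup'_neg' B hB t]
  ring

lemma inf'_add_mul_nonpos (hε : ε ≤ 0) :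
    B.inf' hB (fun x => c + ε * t x) = c + ε * B.sup' hB t := by
  have h1 : (fun x => c + ε * t x) = fun x => c + (-ε) * (-t x) := by
    funext x; ring
  rw [h1, inf'_add_mul_nonneg B hB _ c (-ε) (by linarith), inf'_neg' B hB t]
  ring

end EvalLemmas

open scoped Classical in
/-- For small ε, the sup of the perturbed functional is computed on the max face. -/
lemma sup'_shift {α : Type*} (V : Finset α) (hne : V.Nonempty) (f t : α → ℝ) :
    ∃ ε₀ > 0, ∀ ε : ℝ, |ε| ≤ ε₀ →
      ∀ hB : (V.filter fun x => f x = V.sup' hne f).Nonempty,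
      V.sup' hne (fun x => f x + ε * t x)
        = (V.filter fun x => f x = V.sup' hne f).sup' hB (fun x => f x + ε * t x) := by
  set M := V.sup' hne f with hM
  set B := V.filter fun x => f x = M with hBdef
  set R := V.sup' hne (fun x => |t x|) + 1 with hR
  have hRt : ∀ x ∈ V, |t x| ≤ R := fun x hx =>
    le_trans (le_sup' (fun x => |t x|) hx) (by rw [hR]; linarith)
  have hR0 : 0 < R := by
    obtain ⟨a, ha⟩ := hne
    have := le_trans (abs_nonneg (t a)) (hRt a ha)
    linarith [abs_nonneg (t a), le_sup' (fun x => |t x|) ha]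
  set W := V.filter fun x => f x ≠ M with hWdef
  set δ : ℝ := if hW : W.Nonempty then W.inf' hW (fun x => M - f x) else 1 with hδ
  have hδ0 : 0 < δ := by
    rw [hδ]
    split_ifs with hW
    · refine (Finset.lt_inf'_iff hW).mpr fun x hx => ?_
      rw [hWdef, mem_filter] at hx
      have := le_sup' f hx.1
      rw [← hM] at this
      cases lt_or_eq_of_le this with
      | inl h => linarith
      | inr h => exact absurd h hx.2
    · norm_num
  refine ⟨δ / (2 * R), by positivity, fun ε hε hB => ?_⟩
  have hεR : |ε| * R ≤ δ / 2 := by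
    calc |ε| * R ≤ δ / (2 * R) * R := mul_le_mul_of_nonneg_right hε (le_of_lt hR0)
      _ = δ / 2 := by field_simp
  apply le_antisymm
  · apply sup'_le
    intro x hxV
    by_cases hx : f x = M
    · exact le_sup' (fun x => f x + ε * t x) (mem_filter.2 ⟨hxV, hx⟩)
    · obtain ⟨b, hbB⟩ := hB
      rw [mem_filter] at hbB
      obtain ⟨hbV, hbM⟩ := hbB
      have hxW : x ∈ W := mem_filter.2 ⟨hxV, hx⟩
      have hWne : W.Nonempty := ⟨x, hxW⟩
      have hδle : δ ≤ M - f x := by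
        rw [hδ, dif_pos hWne]
        exact inf'_le _ hxW
      have h1 : ε * t x ≤ |ε| * R := by
        calc ε * t x ≤ |ε * t x| := le_abs_self _
          _ = |ε| * |t x| := abs_mul ε (t x)
          _ ≤ |ε| * R := mul_le_mul_of_nonneg_left (hRt x hxV) (abs_nonneg ε)
      have h2 : -(|ε| * R) ≤ ε * t b := by
        have : |ε * t b| ≤ |ε| * R := by
          rw [abs_mul]
          exact mul_le_mul_of_nonneg_left (hRt b hbV) (abs_nonneg ε)
        linarith [neg_abs_le (ε * t b)]
      have : f x + ε * t x ≤ f b + ε * t b := by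
        rw [hbM]
        clear_value δ M R W B
        linarith
      exact le_trans this (le_sup' (fun x => f x + ε * t x) (mem_filter.2 ⟨hbV, hbM⟩))
  · exact sup'_mono _ (filter_subset _ _) hB

open scoped Classical in
/-- For small ε, the inf of the perturbed functional is computed on the min face. -/
lemma inf'_shift {α : Type*} (V : Finset α) (hne : V.Nonempty) (f t : α → ℝ) :
    ∃ ε₀ > 0, ∀ ε : ℝ, |ε| ≤ ε₀ →
      ∀ hA : (V.filter fun x => f x = V.inf' hne f).Nonempty,
      V.inf' hne (fun x => f x + ε * t x)
        = (V.filter fun x => f x = V.inf' hne f).inf' hA (fun x => f x + ε * t x) := by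
  set m := V.inf' hne f with hm
  set A := V.filter fun x => f x = m with hAdef
  set R := V.sup' hne (fun x => |t x|) + 1 with hR
  have hRt : ∀ x ∈ V, |t x| ≤ R := fun x hx =>
    le_trans (le_sup' (fun x => |t x|) hx) (by rw [hR]; linarith)
  have hR0 : 0 < R := by
    obtain ⟨a, ha⟩ := hne
    linarith [abs_nonneg (t a), le_sup' (fun x => |t x|) ha]
  set W := V.filter fun x => f x ≠ m with hWdef
  set δ : ℝ := if hW : W.Nonempty then W.inf' hW (fun x => f x - m) else 1 with hδ
  have hδ0 : 0 < δ := by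
    rw [hδ]
    split_ifs with hW
    · refine (Finset.lt_inf'_iff hW).mpr fun x hx => ?_
      rw [hWdef, mem_filter] at hx
      have := inf'_le f hx.1
      rw [← hm] at this
      cases lt_or_eq_of_le this with
      | inl h => linarith
      | inr h => exact absurd h.symm hx.2
    · norm_num
  refine ⟨δ / (2 * R), by positivity, fun ε hε hA => ?_⟩
  have hεR : |ε| * R ≤ δ / 2 := by
    calc |ε| * R ≤ δ / (2 * R) * R := mul_le_mul_of_nonneg_right hε (le_of_lt hR0)
      _ = δ / 2 := by field_simp
  apply le_antisymm
  · exact inf'_mono _ (filter_subset _ _) hA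
  · apply le_inf'
    intro x hxV
    by_cases hx : f x = m
    · exact inf'_le (fun x => f x + ε * t x) (mem_filter.2 ⟨hxV, hx⟩)
    · obtain ⟨a, haA⟩ := hA
      rw [mem_filter] at haA
      obtain ⟨haV, ham⟩ := haA
      have hxW : x ∈ W := mem_filter.2 ⟨hxV, hx⟩
      have hWne : W.Nonempty := ⟨x, hxW⟩
      have hδle : δ ≤ f x - m := by
        rw [hδ, dif_pos hWne]
        exact inf'_le _ hxW
      have h1 : -(|ε| * R) ≤ ε * t x := by
        have : |ε * t x| ≤ |ε| * R := by
          rw [abs_mul]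
          exact mul_le_mul_of_nonneg_left (hRt x hxV) (abs_nonneg ε)
        linarith [neg_abs_le (ε * t x)]
      have h2 : ε * t a ≤ |ε| * R := by
        calc ε * t a ≤ |ε * t a| := le_abs_self _
          _ = |ε| * |t a| := abs_mul ε (t a)
          _ ≤ |ε| * R := mul_le_mul_of_nonneg_left (hRt a haV) (abs_nonneg ε)
      have hstep : f a + ε * t a ≤ f x + ε * t x := by
        rw [ham]
        clear_value δ m R W A
        linarith
      exact le_trans (inf'_le (fun x => f x + ε * t x) (mem_filter.2 ⟨haV, ham⟩)) hstep

lemma collinear_of_inner_const {s : Set E2} {u : E2} (hu : ‖u‖ = 1) {k : ℝ}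
    (h : ∀ x ∈ s, ⟪x, u⟫ = k) : Collinear ℝ s := by
  rcases s.eq_empty_or_nonempty with rfl | ⟨a, ha⟩
  · exact collinear_empty ℝ E2
  · rw [collinear_iff_of_mem ha]
    refine ⟨rot u, fun p hp => ⟨⟪p, rot u⟫ - ⟪a, rot u⟫, ?_⟩⟩
    have hvadd : (⟪p, rot u⟫ - ⟪a, rot u⟫) • rot u +ᵥ a
        = (⟪p, rot u⟫ - ⟪a, rot u⟫) • rot u + a := rfl
    rw [hvadd]
    apply inj u hu
    · rw [inner_add_left, real_inner_smul_left, inner_rot_self' u, h p hp, h a ha]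
      ring
    · rw [inner_add_left, real_inner_smul_left, inner_rot_rot u hu]
      ring

lemma build {V : Finset E2} {u : E2} (hu : ‖u‖ = 1) {a b c : E2}
    (ha : a ∈ V) (hb : b ∈ V) (hc : c ∈ V)
    (hfa : ∀ x ∈ convexHull ℝ (V : Set E2), ⟪a, u⟫ ≤ ⟪x, u⟫)
    (hfb : ⟪b, u⟫ = ⟪a, u⟫)
    (hwid : ⟪c, u⟫ - ⟪a, u⟫ = width (convexHull ℝ (V : Set E2)))
    (h1 : ⟪a, rot u⟫ ≤ ⟪c, rot u⟫) (h2 : ⟪c, rot u⟫ ≤ ⟪b, rot u⟫)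
    (h3 : ⟪a, rot u⟫ < ⟪b, rot u⟫) :
    ∃ a' ∈ V, ∃ b' ∈ V, ∃ c' ∈ V, ∃ q ∈ segment ℝ a' b',
      a' ≠ b' ∧
      segment ℝ a' b' ⊆ frontier (convexHull ℝ (V : Set E2)) ∧
      ⟪c' - q, b' - a'⟫ = 0 ∧
      dist c' q = width (convexHull ℝ (V : Set E2)) := by
  have haK : a ∈ convexHull ℝ (V : Set E2) := subset_convexHull ℝ _ (by exact_mod_cast ha)
  have hbK : b ∈ convexHull ℝ (V : Set E2) := subset_convexHull ℝ _ (by exact_mod_cast hb)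
  have hcK : c ∈ convexHull ℝ (V : Set E2) := subset_convexHull ℝ _ (by exact_mod_cast hc)
  have hw0 : 0 ≤ ⟪c, u⟫ - ⟪a, u⟫ := sub_nonneg.2 (hfa c hcK)
  set q : E2 := c - (⟪c, u⟫ - ⟪a, u⟫) • u with hq
  have hcq : c - q = (⟪c, u⟫ - ⟪a, u⟫) • u := by rw [hq]; abel
  have huu : ⟪u, u⟫ = 1 := by rw [real_inner_self_eq_norm_sq, hu]; norm_num
  have hqu : ⟪q, u⟫ = ⟪a, u⟫ := by
    rw [hq, inner_sub_left, real_inner_smul_left, huu]; ring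
  have hqv : ⟪q, rot u⟫ = ⟪c, rot u⟫ := by
    rw [hq, inner_sub_left, real_inner_smul_left, inner_rot_self u]; ring
  have hd : 0 < ⟪b, rot u⟫ - ⟪a, rot u⟫ := sub_pos.2 h3
  have hXY : (⟪b, rot u⟫ - ⟪c, rot u⟫) / (⟪b, rot u⟫ - ⟪a, rot u⟫) +
      (⟪c, rot u⟫ - ⟪a, rot u⟫) / (⟪b, rot u⟫ - ⟪a, rot u⟫) = 1 := by
    rw [← add_div, show (⟪b, rot u⟫ - ⟪c, rot u⟫) + (⟪c, rot u⟫ - ⟪a, rot u⟫)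
      = ⟪b, rot u⟫ - ⟪a, rot u⟫ from by ring, div_self hd.ne']
  have hqseg : q ∈ segment ℝ a b := by
    refine ⟨(⟪b, rot u⟫ - ⟪c, rot u⟫) / (⟪b, rot u⟫ - ⟪a, rot u⟫),
      (⟪c, rot u⟫ - ⟪a, rot u⟫) / (⟪b, rot u⟫ - ⟪a, rot u⟫),
      div_nonneg (sub_nonneg.2 h2) hd.le, div_nonneg (sub_nonneg.2 h1) hd.le, hXY, ?_⟩
    symm
    apply inj u hu
    · rw [inner_add_left, real_inner_smul_left, real_inner_smul_left, hqu, hfb,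
        ← add_mul, hXY, one_mul]
    · rw [inner_add_left, real_inner_smul_left, real_inner_smul_left, hqv,
        div_mul_eq_mul_div, div_mul_eq_mul_div, ← add_div, eq_div_iff hd.ne']
      ring
  have hne : a ≠ b := by
    intro h
    rw [h] at h3
    exact lt_irrefl _ h3
  have hfaseg : ∀ x ∈ segment ℝ a b, ⟪x, u⟫ = ⟪a, u⟫ := by
    rintro x ⟨s, r, hs, hr, hsr, rfl⟩
    rw [inner_add_left, real_inner_smul_left, real_inner_smul_left, hfb]
    linear_combination ⟪a, u⟫ * hsr
  have hfront : segment ℝ a b ⊆ frontier (convexHull ℝ (V : Set E2)) := by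
    intro x hx
    have hxK : x ∈ convexHull ℝ (V : Set E2) :=
      (convex_convexHull ℝ (V : Set E2)).segment_subset haK hbK hx
    have hKclosed : IsClosed (convexHull ℝ (V : Set E2)) :=
      (V.finite_toSet.isCompact_convexHull ℝ).isClosed
    rw [frontier, hKclosed.closure_eq]
    refine ⟨hxK, fun hint => ?_⟩
    obtain ⟨ε, hε, hball⟩ := Metric.mem_nhds_iff.1 (mem_interior_iff_mem_nhds.1 hint)
    have hy : x - (ε / 2) • u ∈ convexHull ℝ (V : Set E2) := by
      apply hball
      rw [Metric.mem_ball, dist_eq_norm]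
      have he : x - (ε / 2) • u - x = -((ε / 2) • u) := by abel
      rw [he, norm_neg, norm_smul, hu, Real.norm_eq_abs, abs_of_pos (by linarith), mul_one]
      linarith
    have hylow := hfa _ hy
    rw [inner_sub_left, real_inner_smul_left, huu, hfaseg x hx] at hylow
    linarith
  have hperp : ⟪c - q, b - a⟫ = 0 := by
    rw [hcq, real_inner_smul_left, inner_sub_right]
    have h' : ⟪u, b⟫ - ⟪u, a⟫ = 0 := by
      rw [real_inner_comm b u, real_inner_comm a u, hfb]; ring
    rw [h', mul_zero]
  have hdist : dist c q = width (convexHull ℝ (V : Set E2)) := by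
    rw [dist_eq_norm, hcq, norm_smul, hu, Real.norm_eq_abs, abs_of_nonneg hw0, mul_one]
    exact hwid
  exact ⟨a, ha, b, hb, c, hc, q, hqseg, hne, hfront, hperp, hdist⟩

end WidthAux


open WidthAux

/-- Lemma (Width): the width of a convex polygon `K = conv V` is achieved by an
edge–vertex pair, with the vertex `c` projecting perpendicularly onto a point `q`
of the edge `[a,b]`. -/
theorem width_edge_vertex
    (V : Finset (EuclideanSpace ℝ (Fin 2)))
    (hV : ¬ Collinear ℝ (V : Set (EuclideanSpace ℝ (Fin 2)))) :
    ∃ a ∈ V, ∃ b ∈ V, ∃ c ∈ V, ∃ q ∈ segment ℝ a b,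
      a ≠ b ∧
      segment ℝ a b ⊆ frontier (convexHull ℝ (V : Set (EuclideanSpace ℝ (Fin 2)))) ∧
      ⟪c - q, b - a⟫ = 0 ∧
      dist c q = width (convexHull ℝ (V : Set (EuclideanSpace ℝ (Fin 2)))) := by
  classical
  have hne : V.Nonempty := by
    rcases V.eq_empty_or_nonempty with h | h
    · exfalso
      apply hV
      rw [h]
      simpa using collinear_empty ℝ (EuclideanSpace ℝ (Fin 2))
    · exact h
  obtain ⟨u, hu, hmin⟩ := exists_min V hne
  have hwG : width (convexHull ℝ (V : Set E2)) =
      V.sup' hne (fun x => ⟪x, u⟫) - V.inf' hne (fun x => ⟪x, u⟫) :=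
    width_eq_min V hne hu hmin
  -- positivity of the width value
  have hMm : 0 < V.sup' hne (fun x => ⟪x, u⟫) - V.inf' hne (fun x => ⟪x, u⟫) := by
    obtain ⟨x0, hx0⟩ := id hne
    have hle : V.inf' hne (fun x => ⟪x, u⟫) ≤ V.sup' hne (fun x => ⟪x, u⟫) :=
      le_trans (inf'_le _ hx0) (le_sup' (fun x => ⟪x, u⟫) hx0)
    rcases lt_or_eq_of_le hle with h | h
    · exact sub_pos.2 h
    · exfalso
      apply hV
      apply collinear_of_inner_const hu (k := V.inf' hne (fun x => ⟪x, u⟫))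
      intro x hx
      have hxV : x ∈ V := by exact_mod_cast hx
      have h1 := inf'_le (fun x => ⟪x, u⟫) hxV
      have h2 := le_sup' (fun x => ⟪x, u⟫) hxV
      rw [← h] at h2
      exact le_antisymm h2 h1
  -- faces
  obtain ⟨b0, hb0, hb0eq⟩ := V.exists_mem_eq_sup' hne (fun x => ⟪x, u⟫)
  obtain ⟨a0, ha0, ha0eq⟩ := V.exists_mem_eq_inf' hne (fun x => ⟪x, u⟫)
  have hBne : (V.filter fun x => ⟪x, u⟫ = V.sup' hne (fun x => ⟪x, u⟫)).Nonempty :=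
    ⟨b0, Finset.mem_filter.2 ⟨hb0, hb0eq.symm⟩⟩
  have hAne : (V.filter fun x => ⟪x, u⟫ = V.inf' hne (fun x => ⟪x, u⟫)).Nonempty :=
    ⟨a0, Finset.mem_filter.2 ⟨ha0, ha0eq.symm⟩⟩
  obtain ⟨ε₁, hε₁, hsup⟩ := sup'_shift V hne (fun x => ⟪x, u⟫) (fun x => ⟪x, rot u⟫)
  obtain ⟨ε₂, hε₂, hinf⟩ := inf'_shift V hne (fun x => ⟪x, u⟫) (fun x => ⟪x, rot u⟫)
  set e := min ε₁ ε₂ with he_def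
  have he : 0 < e := lt_min hε₁ hε₂
  have key : ∀ ε : ℝ, |ε| ≤ e →
      Real.sqrt (1 + ε ^ 2) *
        (V.sup' hne (fun x => ⟪x, u⟫) - V.inf' hne (fun x => ⟪x, u⟫)) ≤
      (V.filter fun x => ⟪x, u⟫ = V.sup' hne (fun x => ⟪x, u⟫)).sup' hBne
          (fun x => ⟪x, u⟫ + ε * ⟪x, rot u⟫) -
        (V.filter fun x => ⟪x, u⟫ = V.inf' hne (fun x => ⟪x, u⟫)).inf' hAne
          (fun x => ⟪x, u⟫ + ε * ⟪x, rot u⟫) := by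
    intro ε hε
    have hp := pert V hne hu ε
    rw [hwG] at hp
    rw [hsup ε (le_trans hε (min_le_left _ _)) hBne,
      hinf ε (le_trans hε (min_le_right _ _)) hAne] at hp
    exact hp
  -- extreme vertices on the faces
  obtain ⟨a1, ha1, ha1t⟩ := Finset.exists_mem_eq_inf' hAne (fun x => ⟪x, rot u⟫)
  obtain ⟨a2, ha2, ha2t⟩ := Finset.exists_mem_eq_sup' hAne (fun x => ⟪x, rot u⟫)
  obtain ⟨b1, hb1, hb1t⟩ := Finset.exists_mem_eq_inf' hBne (fun x => ⟪x, rot u⟫)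
  obtain ⟨b2, hb2, hb2t⟩ := Finset.exists_mem_eq_sup' hBne (fun x => ⟪x, rot u⟫)
  obtain ⟨ha1V, ha1f⟩ := Finset.mem_filter.1 ha1
  obtain ⟨ha2V, ha2f⟩ := Finset.mem_filter.1 ha2
  obtain ⟨hb1V, hb1f⟩ := Finset.mem_filter.1 hb1
  obtain ⟨hb2V, hb2f⟩ := Finset.mem_filter.1 hb2
  -- evaluate the perturbed support functions at ε = e and ε = -e
  have hcongBev1 : ∀ x ∈ (V.filter fun x => ⟪x, u⟫ = V.sup' hne (fun x => ⟪x, u⟫)),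
      ⟪x, u⟫ + e * ⟪x, rot u⟫ = V.sup' hne (fun x => ⟪x, u⟫) + e * ⟪x, rot u⟫ :=
    fun x hx => by rw [(Finset.mem_filter.1 hx).2]
  have hBev1 : (V.filter fun x => ⟪x, u⟫ = V.sup' hne (fun x => ⟪x, u⟫)).sup' hBne
      (fun x => ⟪x, u⟫ + e * ⟪x, rot u⟫)
      = V.sup' hne (fun x => ⟪x, u⟫) + e * ⟪b2, rot u⟫ := by
    rw [Finset.sup'_congr hBne rfl hcongBev1,
      sup'_add_mul_nonneg _ hBne _ _ e he.le, ← hb2t]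
  have hcongAev1 : ∀ x ∈ (V.filter fun x => ⟪x, u⟫ = V.inf' hne (fun x => ⟪x, u⟫)),
      ⟪x, u⟫ + e * ⟪x, rot u⟫ = V.inf' hne (fun x => ⟪x, u⟫) + e * ⟪x, rot u⟫ :=
    fun x hx => by rw [(Finset.mem_filter.1 hx).2]
  have hAev1 : (V.filter fun x => ⟪x, u⟫ = V.inf' hne (fun x => ⟪x, u⟫)).inf' hAne
      (fun x => ⟪x, u⟫ + e * ⟪x, rot u⟫)
      = V.inf' hne (fun x => ⟪x, u⟫) + e * ⟪a1, rot u⟫ := by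
    rw [Finset.inf'_congr hAne rfl hcongAev1,
      inf'_add_mul_nonneg _ hAne _ _ e he.le, ← ha1t]
  have hcongBev2 : ∀ x ∈ (V.filter fun x => ⟪x, u⟫ = V.sup' hne (fun x => ⟪x, u⟫)),
      ⟪x, u⟫ + (-e) * ⟪x, rot u⟫ = V.sup' hne (fun x => ⟪x, u⟫) + (-e) * ⟪x, rot u⟫ :=
    fun x hx => by rw [(Finset.mem_filter.1 hx).2]
  have hBev2 : (V.filter fun x => ⟪x, u⟫ = V.sup' hne (fun x => ⟪x, u⟫)).sup' hBne
      (fun x => ⟪x, u⟫ + (-e) * ⟪x, rot u⟫)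
      = V.sup' hne (fun x => ⟪x, u⟫) + (-e) * ⟪b1, rot u⟫ := by
    rw [Finset.sup'_congr hBne rfl hcongBev2,
      sup'_add_mul_nonpos _ hBne _ _ (-e) (by linarith), ← hb1t]
  have hcongAev2 : ∀ x ∈ (V.filter fun x => ⟪x, u⟫ = V.inf' hne (fun x => ⟪x, u⟫)),
      ⟪x, u⟫ + (-e) * ⟪x, rot u⟫ = V.inf' hne (fun x => ⟪x, u⟫) + (-e) * ⟪x, rot u⟫ :=
    fun x hx => by rw [(Finset.mem_filter.1 hx).2]
  have hAev2 : (V.filter fun x => ⟪x, u⟫ = V.inf' hne (fun x => ⟪x, u⟫)).inf' hAne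
      (fun x => ⟪x, u⟫ + (-e) * ⟪x, rot u⟫)
      = V.inf' hne (fun x => ⟪x, u⟫) + (-e) * ⟪a2, rot u⟫ := by
    rw [Finset.inf'_congr hAne rfl hcongAev2,
      inf'_add_mul_nonpos _ hAne _ _ (-e) (by linarith), ← ha2t]
  have hsqrt : 1 < Real.sqrt (1 + e ^ 2) := by
    have h1 : (1 : ℝ) < 1 + e ^ 2 := by nlinarith
    calc (1 : ℝ) = Real.sqrt 1 := Real.sqrt_one.symm
      _ < Real.sqrt (1 + e ^ 2) := Real.sqrt_lt_sqrt (by norm_num) h1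
  have hkey1 := key e (by rw [abs_of_pos he])
  rw [hBev1, hAev1] at hkey1
  have hkey2 := key (-e) (by rw [abs_neg, abs_of_pos he])
  rw [hBev2, hAev2, neg_sq] at hkey2
  have hstrict1 : ⟪a1, rot u⟫ < ⟪b2, rot u⟫ := by
    nlinarith [mul_lt_mul_of_pos_right hsqrt hMm]
  have hstrict2 : ⟪b1, rot u⟫ < ⟪a2, rot u⟫ := by
    nlinarith [mul_lt_mul_of_pos_right hsqrt hMm]
  by_cases hc : ⟪a1, rot u⟫ ≤ ⟪b1, rot u⟫
  · -- bottom edge (a1, a2), top vertex b1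
    apply build hu ha1V ha2V hb1V
    · intro x hx
      rw [ha1f]
      exact inf'_le_inner V hne u hx
    · rw [ha2f, ha1f]
    · rw [hb1f, ha1f, ← hwG]
    · exact hc
    · exact le_of_lt hstrict2
    · exact lt_of_le_of_lt hc hstrict2
  · -- top edge (b2, b1), bottom vertex a1, direction -u
    push_neg at hc
    have hu' : ‖-u‖ = 1 := by rw [norm_neg]; exact hu
    have hres := build (V := V) (u := -u) hu' hb2V hb1V ha1V ?_ ?_ ?_ ?_ ?_ ?_
    · exact hres
    · intro x hx
      rw [inner_neg_right, inner_neg_right, neg_le_neg_iff]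
      rw [hb2f]
      exact inner_le_sup' V hne u hx
    · rw [inner_neg_right, inner_neg_right, neg_inj, hb1f, hb2f]
    · rw [inner_neg_right, inner_neg_right, ha1f, hb2f, hwG]
      ring
    · rw [rot_neg, inner_neg_right, inner_neg_right, neg_le_neg_iff]
      exact le_of_lt hstrict1
    · rw [rot_neg, inner_neg_right, inner_neg_right, neg_le_neg_iff]
      exact le_of_lt hc
    · rw [rot_neg, inner_neg_right, inner_neg_right, neg_lt_neg_iff]
      exact lt_trans hc hstrict1
end
end

section
/- Hull-edge replacement invariant (induction claim (2) in the proof of Theorem 11.1): Let V be a finite set of points in ℝ², no three of which are collinear, let a, b ∈ V be distinct with the segment [a,b] contained in the frontier of conv V (an edge of the hull), let m be a point of the segment [a,b], and let V' = (V \ {a,b}) ∪ {m}. Then the segment [a,b] intersects conv V' exactly in the single point m: [a,b] ∩ conv V' = {m}. -/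
local notation "E2" => EuclideanSpace ℝ (Fin 2)

/-- Hull-edge replacement invariant: if `[a,b]` is an edge of the convex hull of
a finite set `V` in general position, `m` is a point of `[a,b]`, and
`V' = (V \ {a,b}) ∪ {m}`, then the segment `[a,b]` meets `conv V'` exactly in
the single point `m`. -/
theorem hull_edge_replacement
    (V : Set E2) (hVfin : V.Finite)
    (hgp : ∀ p ∈ V, ∀ q ∈ V, ∀ r ∈ V, p ≠ q → p ≠ r → q ≠ r →
      ¬ Collinear ℝ ({p, q, r} : Set E2))
    (a b m : E2) (ha : a ∈ V) (hb : b ∈ V) (hab : a ≠ b)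
    (hedge : segment ℝ a b ⊆ frontier (convexHull ℝ V))
    (hm : m ∈ segment ℝ a b) :
    segment ℝ a b ∩ convexHull ℝ ((V \ {a, b}) ∪ {m}) = {m} := by
  have hmV' : m ∈ convexHull ℝ ((V \ {a, b}) ∪ {m}) :=
    subset_convexHull ℝ _ (Or.inr rfl)
  apply Set.eq_singleton_iff_unique_mem.mpr
  refine ⟨⟨hm, hmV'⟩, ?_⟩
  rintro x ⟨hxseg, hxhull⟩
  by_cases hS : (V \ {a, b}).Nonempty
  · obtain ⟨p, hpV, hpab⟩ := hS
    have hpa : p ≠ a := fun h => hpab (by simp [h])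
    have hpb : p ≠ b := fun h => hpab (by simp [h])
    have hncol : ¬ Collinear ℝ ({p, a, b} : Set E2) := hgp p hpV a ha b hb hpa hpb hab
    -- the affine span of V is everything
    have hspanV : affineSpan ℝ V = ⊤ := by
      have hai : AffineIndependent ℝ ![p, a, b] :=
        affineIndependent_iff_not_collinear_set.mpr hncol
      have htop : affineSpan ℝ (Set.range ![p, a, b]) = ⊤ := by
        rw [hai.affineSpan_eq_top_iff_card_eq_finrank_add_one]
        simp [finrank_euclideanSpace_fin]
      have hrange : Set.range ![p, a, b] = ({p, a, b} : Set E2) := by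
        ext y
        simp [Matrix.range_cons, Matrix.range_empty]
        tauto
      rw [hrange] at htop
      refine top_unique ?_
      rw [← htop]
      apply affineSpan_mono
      rintro y (rfl | rfl | rfl)
      · exact hpV
      · exact ha
      · exact hb
    have hKconv : Convex ℝ (convexHull ℝ V) := convex_convexHull ℝ V
    have hint : (interior (convexHull ℝ V)).Nonempty := by
      rw [hKconv.interior_nonempty_iff_affineSpan_eq_top, affineSpan_convexHull]
      exact hspanV
    obtain ⟨z, hz⟩ := hint
    set c0 := midpoint ℝ a b with hc0
    have hc0seg : c0 ∈ segment ℝ a b := midpoint_mem_segment a b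
    have hc0ni : c0 ∉ interior (convexHull ℝ V) := (hedge hc0seg).2
    obtain ⟨f, hf⟩ := geometric_hahn_banach_open_point hKconv.interior isOpen_interior hc0ni
    -- f ≤ f c0 on conv V
    have hle : ∀ y ∈ convexHull ℝ V, f y ≤ f c0 := by
      intro y hy
      by_contra h
      push_neg at h
      have hzlt := hf z hz
      set d : ℝ := f y - f c0 with hd
      have hd0 : 0 < d := sub_pos.mpr h
      set e : ℝ := f y - f z with he
      have he0 : 0 < e := by simp only [he]; linarith
      set t : ℝ := d / (2 * e) with ht
      have ht0 : 0 < t := div_pos hd0 (by linarith)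
      have hte : t * e = d / 2 := by
        rw [ht, div_mul_eq_mul_div]
        exact (div_eq_div_iff (mul_pos two_pos he0).ne' (by norm_num)).mpr (by ring)
      have ht1 : t ≤ 1 := by nlinarith
      have hmem : t • z + (1 - t) • y ∈ interior (convexHull ℝ V) :=
        hKconv.combo_interior_closure_mem_interior hz (subset_closure hy) ht0
          (by linarith) (by ring)
      have hlt := hf _ hmem
      rw [map_add, map_smul, map_smul, smul_eq_mul, smul_eq_mul] at hlt
      nlinarith
    have hfa : f a = f c0 := by
      have h1 := hle a (subset_convexHull ℝ V ha)
      have h2 := hle b (subset_convexHull ℝ V hb)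
      have h3 : f c0 = (f a + f b) / 2 := by
        rw [hc0, midpoint_eq_smul_add, map_smul, map_add, smul_eq_mul, invOf_eq_inv]
        ring
      linarith
    have hfb : f b = f c0 := by
      have h1 := hle a (subset_convexHull ℝ V ha)
      have h2 := hle b (subset_convexHull ℝ V hb)
      have h3 : f c0 = (f a + f b) / 2 := by
        rw [hc0, midpoint_eq_smul_add, map_smul, map_add, smul_eq_mul, invOf_eq_inv]
        ring
      linarith
    have hsegc : ∀ w ∈ segment ℝ a b, f w = f c0 := by
      rintro w ⟨s, t, hs, ht, hst, rfl⟩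
      rw [map_add, map_smul, map_smul, smul_eq_mul, smul_eq_mul, hfa, hfb]
      linear_combination f c0 * hst
    -- strict inequality on V \ {a,b}
    have hstrict : ∀ q ∈ V \ ({a, b} : Set E2), f q < f c0 := by
      rintro q ⟨hqV, hqab⟩
      have hqa : q ≠ a := fun h => hqab (by simp [h])
      have hqb : q ≠ b := fun h => hqab (by simp [h])
      rcases lt_or_eq_of_le (hle q (subset_convexHull ℝ V hqV)) with hlt | heq
      · exact hlt
      exfalso
      apply hgp q hqV a ha b hb hqa hqb hab
      -- q, a, b all lie on the line {f = f c0}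
      have hker : vectorSpan ℝ ({q, a, b} : Set E2) ≤ LinearMap.ker (f : E2 →ₗ[ℝ] ℝ) := by
        rw [vectorSpan_def]
        apply Submodule.span_le.mpr
        rintro v ⟨u, hu, w, hw, rfl⟩
        have hval : ∀ y ∈ ({q, a, b} : Set E2), f y = f c0 := by
          rintro y (rfl | rfl | rfl)
          · exact heq
          · exact hfa
          · exact hfb
        simp only [SetLike.mem_coe, LinearMap.mem_ker, ContinuousLinearMap.coe_coe,
          vsub_eq_sub, map_sub]
        rw [hval u hu, hval w hw, sub_self]
      have hf0 : LinearMap.range (f : E2 →ₗ[ℝ] ℝ) ≠ ⊥ := by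
        intro h0
        have hz0 : f z = 0 := by
          have : f z ∈ LinearMap.range (f : E2 →ₗ[ℝ] ℝ) := ⟨z, rfl⟩
          rw [h0] at this
          simpa using this
        have hc00 : f c0 = 0 := by
          have : f c0 ∈ LinearMap.range (f : E2 →ₗ[ℝ] ℝ) := ⟨c0, rfl⟩
          rw [h0] at this
          simpa using this
        have := hf z hz
        rw [hz0, hc00] at this
        exact lt_irrefl 0 this
      have hrange1 : 1 ≤ Module.finrank ℝ (LinearMap.range (f : E2 →ₗ[ℝ] ℝ)) := by
        by_contra hcon
        push_neg at hcon
        interval_cases h : Module.finrank ℝ (LinearMap.range (f : E2 →ₗ[ℝ] ℝ))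
        exact hf0 (Submodule.finrank_eq_zero.mp h)
      have hrn := LinearMap.finrank_range_add_finrank_ker (f : E2 →ₗ[ℝ] ℝ)
      rw [finrank_euclideanSpace_fin] at hrn
      have hker1 : Module.finrank ℝ (LinearMap.ker (f : E2 →ₗ[ℝ] ℝ)) ≤ 1 := by omega
      rw [collinear_iff_finrank_le_one]
      exact le_trans (Submodule.finrank_mono hker) hker1
    -- conv (V \ {a,b}) lies strictly below
    have hSsub : convexHull ℝ (V \ {a, b}) ⊆ {y : E2 | f y < f c0} :=
      convexHull_min hstrict (convex_halfSpace_lt ((f : E2 →ₗ[ℝ] ℝ)).isLinear _)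
    have hSne : (V \ ({a, b} : Set E2)).Nonempty := ⟨p, hpV, hpab⟩
    rw [Set.union_singleton, convexHull_insert hSne, mem_convexJoin] at hxhull
    obtain ⟨m', hm', y, hy, u, v, hu, hv, huv, hx⟩ := hxhull
    rw [Set.mem_singleton_iff] at hm'
    rw [hm'] at hx
    have hfy : f y < f c0 := hSsub hy
    have hfx : f x = f c0 := hsegc x hxseg
    have hfm : f m = f c0 := hsegc m hm
    have hfx2 : u * f m + v * f y = f c0 := by
      rw [← hfx, ← hx, map_add, map_smul, map_smul, smul_eq_mul, smul_eq_mul]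
    have hveq : v * (f y - f c0) = 0 := by linear_combination hfx2 - u * hfm - f c0 * huv
    have hv0 : v = 0 := by
      rcases mul_eq_zero.mp hveq with h | h
      · exact h
      · linarith
    have hu1 : u = 1 := by linarith
    rw [← hx, hv0, hu1, one_smul, zero_smul, add_zero]
  · rw [Set.not_nonempty_iff_eq_empty] at hS
    rw [hS, Set.empty_union, convexHull_singleton] at hxhull
    exact hxhull
end
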